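/- arXiv:1710.02063 — 2 statements merged into one kernel-verified Lean document; each statement's English description precedes it below -/
import Mathlib

section
/- Let A be a generating set of G closed under G-conjugation, let g ∈ G with ℓ_A(g) = n, fix k ≤ n and indices 1 ≤ i₁ < i₂ < ⋯ < i_k ≤ n. For x ∈ G with ℓ_A(x) = k the following are equivalent: (i) x ≤_A g; (ii) there exists a reduced A-factorization (a₁, ..., a_n) of g such that x = a_{i₁} a_{i₂} ⋯ a_{i_k}. -/
variable {G : Type*} [Group G]

/-- `A` generates `G` as a monoid. -/
def GeneratesM (A : Set G) : Prop :=
  ∀ x : G, ∃ l : List G, (∀ a ∈ l, a ∈ A) ∧ l.prod = x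

/-- `A` is closed under `G`-conjugation. -/
def ConjClosed (A : Set G) : Prop :=
  ∀ g a : G, a ∈ A → g * a * g⁻¹ ∈ A

/-- The `A`-length of `x`: minimal number of factors from `A` needed to write `x`. -/
noncomputable def lenA (A : Set G) (x : G) : ℕ :=
  sInf {n : ℕ | ∃ l : List G, (∀ a ∈ l, a ∈ A) ∧ l.prod = x ∧ l.length = n}

/-- The `A`-prefix order. -/
def leA (A : Set G) (x y : G) : Prop :=
  lenA A x + lenA A (x⁻¹ * y) = lenA A y

/-- The set of reduced `A`-factorizations of `x`, as lists. -/
def RedA (A : Set G) (x : G) : Set (List G) :=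
  {l : List G | (∀ a ∈ l, a ∈ A) ∧ l.prod = x ∧ l.length = lenA A x}

/-- `A_c`: the generators occurring below `c`. -/
def Ac (A : Set G) (c : G) : Set G := {a : G | a ∈ A ∧ leA A a c}

/-- A single Hurwitz move on factorizations. -/
def HurwitzMove : List G → List G → Prop := fun l m =>
  ∃ (p s : List G) (a b : G),
    l = p ++ a :: b :: s ∧ m = p ++ b :: (b⁻¹ * a * b) :: s

/-- `r` is a linear order on the set `S`. -/
def IsLinearOrderOn (S : Set G) (r : G → G → Prop) : Prop :=
  (∀ a ∈ S, r a a) ∧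
  (∀ a ∈ S, ∀ b ∈ S, r a b → r b a → a = b) ∧
  (∀ a ∈ S, ∀ b ∈ S, ∀ c ∈ S, r a b → r b c → r a c) ∧
  (∀ a ∈ S, ∀ b ∈ S, r a b ∨ r b a)

/-- `r` is a `c`-compatible order: every length-2 element below `c` has a unique
rising reduced factorization. -/
def CompatibleOrder (A : Set G) (c : G) (r : G → G → Prop) : Prop :=
  ∀ g : G, leA A g c → lenA A g = 2 →
    ∃! l : List G, l ∈ RedA A g ∧ l.Chain' r

/-- Two factorizations correspond to maximal chains differing in exactly one element. -/
def ChainAdj (l m : List G) : Prop :=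
  l ≠ m ∧ ∃ (p s : List G) (a b a' b' : G),
    l = p ++ a :: b :: s ∧ m = p ++ a' :: b' :: s ∧ a * b = a' * b'

/-- Covering relation in the graded factorization poset. -/
def CoversA (A : Set G) (x y : G) : Prop := leA A x y ∧ lenA A y = lenA A x + 1

/-- `F_≺(a; g)`: upper covers of the atom `a` in `P_g` that also cover a strictly
smaller atom. -/
def Fset (A : Set G) (r : G → G → Prop) (a g : G) : Set G :=
  {h : G | CoversA A a h ∧ leA A h g ∧
    ∃ a' ∈ A, a' ≠ a ∧ r a' a ∧ CoversA A a' h}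

/-- `P_c` is well-covered with respect to `r`. -/
def WellCovered (A : Set G) (c : G) (r : G → G → Prop) : Prop :=
  ∀ a ∈ A, leA A a c →
    (Fset A r a c = ∅ ↔ ∀ b ∈ A, leA A b c → r a b)

/-- `P_c` is totally well-covered with respect to `r`. -/
def TotallyWellCovered (A : Set G) (c : G) (r : G → G → Prop) : Prop :=
  ∀ g : G, leA A g c → WellCovered A g r

section Aux

variable {G : Type*} [Group G]

lemma lenA_le' (A : Set G) {x : G} {l : List G} (hl : ∀ a ∈ l, a ∈ A) (hp : l.prod = x) :
    lenA A x ≤ l.length :=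
  Nat.sInf_le ⟨l, hl, hp, rfl⟩

lemma exists_red (A : Set G) (hgen : GeneratesM A) (x : G) :
    ∃ l : List G, (∀ a ∈ l, a ∈ A) ∧ l.prod = x ∧ l.length = lenA A x := by
  obtain ⟨l, hl, hp⟩ := hgen x
  have : lenA A x ∈ {n : ℕ | ∃ l : List G, (∀ a ∈ l, a ∈ A) ∧ l.prod = x ∧ l.length = n} :=
    Nat.sInf_mem ⟨l.length, l, hl, hp, rfl⟩
  exact this

lemma lenA_mul_le (A : Set G) (hgen : GeneratesM A) (x y : G) :
    lenA A (x * y) ≤ lenA A x + lenA A y := by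
  obtain ⟨l1, h1, p1, n1⟩ := exists_red A hgen x
  obtain ⟨l2, h2, p2, n2⟩ := exists_red A hgen y
  have := lenA_le' A (x := x * y) (l := l1 ++ l2)
    (by intro a ha; rcases List.mem_append.1 ha with h | h; exacts [h1 a h, h2 a h])
    (by rw [List.prod_append, p1, p2])
  simpa [List.length_append, n1, n2] using this

lemma getElem_cons_pos {α : Type*} (a : α) (l : List α) {i : ℕ} (hi : 1 ≤ i)
    (h : i < (a :: l).length) :
    (a :: l)[i] = l[i - 1]'(by simp at h; omega) := by
  match i, hi with
  | i + 1, _ => simp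

/-- Extraction: a sublist of an `A`-word can be pulled to the front. -/
lemma extract_sublist (A : Set G) (hconj : ConjClosed A) :
    ∀ {s l : List G}, List.Sublist s l → (∀ a ∈ l, a ∈ A) →
      ∃ t : List G, (∀ a ∈ t, a ∈ A) ∧ s.length + t.length = l.length ∧
        s.prod * t.prod = l.prod := by
  intro s l h
  induction h with
  | slnil => exact fun _ => ⟨[], by simp, by simp, by simp⟩
  | @cons s' l' a h ih =>
      intro hl
      obtain ⟨t, ht, hlen, hp⟩ := ih (fun b hb => hl b (List.mem_cons_of_mem _ hb))
      refine ⟨(s'.prod⁻¹ * a * s'.prod) :: t, ?_, ?_, ?_⟩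
      · intro b hb
        rcases List.mem_cons.1 hb with rfl | hb
        · simpa using hconj s'.prod⁻¹ a (hl a (List.mem_cons_self))
        · exact ht b hb
      · simp only [List.length_cons] at hlen ⊢; omega
      · rw [List.prod_cons, List.prod_cons, ← hp]; group
  | @cons_cons s' l' a h ih =>
      intro hl
      obtain ⟨t, ht, hlen, hp⟩ := ih (fun b hb => hl b (List.mem_cons_of_mem _ hb))
      refine ⟨t, ht, ?_, ?_⟩
      · simp only [List.length_cons] at hlen ⊢; omega
      · rw [List.prod_cons, List.prod_cons, mul_assoc, hp]

/-- Splicing: insert the letters of `lb` at prescribed positions among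
conjugates of the letters of `lc`. -/
lemma splice (A : Set G) (hconj : ConjClosed A) :
    ∀ (N : ℕ) (is : List ℕ) (lb lc : List G),
      lb.length + lc.length = N →
      is.Pairwise (· < ·) → (∀ p ∈ is, p < N) → is.length = lb.length →
      (∀ a ∈ lb, a ∈ A) → (∀ a ∈ lc, a ∈ A) →
      ∃ m : List G, m.length = N ∧ (∀ a ∈ m, a ∈ A) ∧ m.prod = lb.prod * lc.prod ∧
        ∀ (j : ℕ) (hj : j < is.length) (h2 : is[j] < m.length) (h3 : j < lb.length),
          m[is[j]] = lb[j] := by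
  intro N
  induction N with
  | zero =>
      intro is lb lc hN _ _ hlen _ _
      have hb : lb = [] := List.length_eq_zero_iff.1 (by omega)
      have hc : lc = [] := List.length_eq_zero_iff.1 (by omega)
      subst hb; subst hc
      exact ⟨[], by simp, by simp, by simp, by simp at hlen; omega⟩
  | succ N ih =>
      intro is lb lc hN hpw hbd hlen hb hc
      match is with
      | [] =>
          have hb0 : lb = [] := List.length_eq_zero_iff.1 (by simpa using hlen.symm)
          subst hb0
          refine ⟨lc, by simpa using hN, hc, by simp, ?_⟩
          intro j hj; simp at hj
      | 0 :: is' =>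
          match lb with
          | [] => simp at hlen
          | b :: lb' =>
              have hpos : ∀ p ∈ is', 1 ≤ p := by
                intro p hp
                exact (List.pairwise_cons.1 hpw).1 p hp
              have hpw' : (is'.map (· - 1)).Pairwise (· < ·) := by
                rw [List.pairwise_map]
                refine ((List.pairwise_cons.1 hpw).2).imp_of_mem ?_
                intro a b ha hb hab
                have := hpos a ha
                omega
              obtain ⟨m', hm'len, hm'A, hm'prod, hm'get⟩ :=
                ih (is'.map (· - 1)) lb' lc
                  (by simp at hN ⊢; omega) hpw'
                  (by
                    intro p hp
                    obtain ⟨q, hq, rfl⟩ := List.mem_map.1 hp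
                    have h1 := hpos q hq
                    have h2 := hbd q (List.mem_cons_of_mem _ hq)
                    omega)
                  (by simp at hlen ⊢; omega)
                  (fun a ha => hb a (List.mem_cons_of_mem _ ha)) hc
              refine ⟨b :: m', by simp [hm'len], ?_, ?_, ?_⟩
              · intro a ha
                rcases List.mem_cons.1 ha with rfl | ha
                · exact hb a (List.mem_cons_self)
                · exact hm'A a ha
              · rw [List.prod_cons, List.prod_cons, hm'prod, mul_assoc]
              · intro j hj h2 h3
                match j, hj, h3 with
                | 0, _, _ => simp
                | j + 1, hj, h3 =>
                    have hj' : j < is'.length := by simpa using hj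
                    have h3' : j < lb'.length := by simpa using h3
                    have hq1 : 1 ≤ is'[j] := hpos _ (List.getElem_mem _)
                    simp only [List.getElem_cons_succ]
                    simp only [List.getElem_cons_succ] at h2
                    rw [getElem_cons_pos b m' hq1 h2]
                    have key := hm'get j (by simpa using hj')
                      (by simp only [List.getElem_map]; simp at h2 ⊢; omega) h3'
                    simp only [List.getElem_map] at key
                    exact key
      | (q0 + 1) :: is'' =>
          set isl : List ℕ := (q0 + 1) :: is'' with hisl
          have hpos : ∀ p ∈ isl, 1 ≤ p := by
            intro p hp
            rcases List.mem_cons.1 hp with rfl | hp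
            · omega
            · have := (List.pairwise_cons.1 hpw).1 p hp; omega
          -- `isl` has at most `N` elements since its entries lie in `[1, N]`
          have hsubperm : List.Subperm isl (List.range' 1 N) := by
            refine List.Nodup.subperm (hpw.imp (fun {a b} h => Nat.ne_of_lt h)) ?_
            intro p hp
            have h1 := hpos p hp
            have h2 := hbd p hp
            exact List.mem_range'_1.2 ⟨h1, by omega⟩
          have hislen : isl.length ≤ N := by simpa using hsubperm.length_le
          match lc with
          | [] =>
              exfalso
              have h1 : lb.length = isl.length := hlen.symm
              simp at hN
              omega
          | c :: lc' =>
              have hpw' : (isl.map (· - 1)).Pairwise (· < ·) := by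
                rw [List.pairwise_map]
                refine hpw.imp_of_mem ?_
                intro a b ha hb hab
                have := hpos a ha
                omega
              obtain ⟨m', hm'len, hm'A, hm'prod, hm'get⟩ :=
                ih (isl.map (· - 1)) lb lc'
                  (by simp at hN ⊢; omega) hpw'
                  (by
                    intro p hp
                    obtain ⟨r, hr, rfl⟩ := List.mem_map.1 hp
                    have h1 := hpos r hr
                    have h2 := hbd r hr
                    omega)
                  (by simpa using hlen) hb
                  (fun a ha => hc a (List.mem_cons_of_mem _ ha))
              refine ⟨(lb.prod * c * lb.prod⁻¹) :: m', by simp [hm'len], ?_, ?_, ?_⟩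
              · intro a ha
                rcases List.mem_cons.1 ha with rfl | ha
                · exact hconj lb.prod c (hc c (List.mem_cons_self))
                · exact hm'A a ha
              · rw [List.prod_cons, hm'prod, List.prod_cons]
                group
              · intro j hj h2 h3
                have hq1 : 1 ≤ isl[j] := hpos _ (List.getElem_mem _)
                rw [getElem_cons_pos _ m' hq1 h2]
                have key := hm'get j (by simpa using hj)
                  (by simp only [List.getElem_map]; simp at h2 ⊢; omega) h3
                simp only [List.getElem_map] at key
                exact key

end Aux


theorem subword_order (A : Set G) (hgen : GeneratesM A) (hconj : ConjClosed A)
    (g : G) (n k : ℕ) (hn : lenA A g = n) (hk : k ≤ n)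
    (i : Fin k → Fin n) (hi : StrictMono i)
    (x : G) (hx : lenA A x = k) :
    leA A x g ↔
      ∃ a : Fin n → G, List.ofFn a ∈ RedA A g ∧
        x = (List.ofFn fun j : Fin k => a (i j)).prod := by
  constructor
  · intro hle
    have hle' : lenA A x + lenA A (x⁻¹ * g) = lenA A g := hle
    have hrest : lenA A (x⁻¹ * g) = n - k := by rw [hx, hn] at hle'; omega
    obtain ⟨lb, hbA, hbprod, hblen⟩ := exists_red A hgen x
    obtain ⟨lc, hcA, hcprod, hclen⟩ := exists_red A hgen (x⁻¹ * g)
    have hbl : lb.length = k := by rw [hblen, hx]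
    have hcl : lc.length = n - k := by rw [hclen, hrest]
    obtain ⟨m, hmlen, hmA, hmprod, hmget⟩ :=
      splice A hconj n (List.ofFn fun j : Fin k => (i j : ℕ)) lb lc
        (by omega)
        (List.pairwise_ofFn.2 fun a b h => hi h)
        (by
          intro p hp
          obtain ⟨j, rfl⟩ := List.mem_ofFn.1 hp
          exact (i j).isLt)
        (by simp [hbl])
        hbA hcA
    have hmprodg : m.prod = g := by rw [hmprod, hbprod, hcprod]; group
    set a : Fin n → G := fun p => m.get (Fin.cast hmlen.symm p) with ha
    have heq : List.ofFn a = m := by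
      apply List.ext_get (by simp [hmlen])
      intro j h1 h2
      simp [ha, List.get_ofFn]
    refine ⟨a, ?_, ?_⟩
    · rw [RedA, Set.mem_setOf_eq, heq]
      exact ⟨hmA, hmprodg, by rw [hmlen, hn]⟩
    · have heq2 : (List.ofFn fun j : Fin k => a (i j)) = lb := by
        apply List.ext_get (by simp [hbl])
        intro j h1 h2
        have h1' : j < k := by simpa using h1
        have hjlt : j < (List.ofFn fun j : Fin k => (i j : ℕ)).length := by
          simpa using h1'
        have hlt : (List.ofFn fun j : Fin k => (i j : ℕ))[j] < m.length := by
          simp only [List.getElem_ofFn]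
          rw [hmlen]; exact (i _).isLt
        have key := hmget j hjlt hlt h2
        simp only [List.getElem_ofFn] at key
        simp only [List.get_eq_getElem, List.getElem_ofFn, ha, Fin.coe_cast,
          List.get_eq_getElem]
        exact key
      rw [heq2, hbprod]
  · rintro ⟨a, ⟨haA, haprod, halen⟩, hxprod⟩
    have hsub : List.Sublist (List.ofFn i) (List.finRange n) :=
      List.sublist_of_subperm_of_pairwise
        ((List.nodup_ofFn.2 hi.injective).subperm (fun p _ => List.mem_finRange p))
        (List.pairwise_ofFn.2 fun a b h => (hi h).le)
        (List.pairwise_le_finRange n)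
    have hsub2 : List.Sublist (List.ofFn fun j : Fin k => a (i j)) (List.ofFn a) := by
      have := hsub.map a
      rwa [List.map_ofFn, ← List.ofFn_eq_map] at this
    obtain ⟨t, htA, htlen, htprod⟩ := extract_sublist A hconj hsub2 haA
    have hxg : x * t.prod = g := by
      rw [hxprod, htprod, haprod]
    have hxi : x⁻¹ * g = t.prod := by rw [← hxg]; group
    have h1 : lenA A (x⁻¹ * g) ≤ n - k := by
      have := lenA_le' A htA hxi.symm
      simp only [List.length_ofFn] at htlen
      omega
    have h2 : lenA A g ≤ lenA A x + lenA A (x⁻¹ * g) := by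
      have := lenA_mul_le A hgen x (x⁻¹ * g)
      simpa [mul_inv_cancel_left] using this
    show lenA A x + lenA A (x⁻¹ * g) = lenA A g
    rw [hx, hn] at *
    omega
end

section
/- Let c ∈ G with ℓ_A(c) = 2 and Red_A(c) finite. Then the number of Hurwitz orbits of Red_A(c) equals the minimum, over all linear orders ≺ on A_c = {a ∈ A : a ≤_A c}, of the number of ≺-rising reduced A-factorizations of c. In particular, for any linear order ≺, the number of Hurwitz orbits is at most the number of ≺-rising factorizations, and there exists an order achieving equality. -/
variable {G : Type*} [Group G]

section OrbitsAux

open Relation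

variable {G : Type*} [Group G]

/-- auxiliary: the map `x ↦ x⁻¹ c`. -/
def tauH (c x : G) : G := x⁻¹ * c

/-- auxiliary: its inverse `y ↦ c y⁻¹`. -/
def upsH (c y : G) : G := c * y⁻¹

/-- auxiliary: the factorization `[x, x⁻¹ c]`. -/
def phiH (c x : G) : List G := [x, x⁻¹ * c]

/-- auxiliary: first components of reduced factorizations. -/
def XH (A : Set G) (c : G) : Set G := {x | x ∈ A ∧ x⁻¹ * c ∈ A}

/-- auxiliary: iterate relation. -/
def RH (c : G) (x y : G) : Prop := ∃ k : ℕ, (tauH c)^[k] x = y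

/-- auxiliary: orbit of `x`. -/
def orbH (A : Set G) (c : G) (x : G) : Set G := {y | y ∈ XH A c ∧ RH c x y}

lemma tauH_inj (c : G) : Function.Injective (tauH c) := by
  intro a b h
  have := mul_right_cancel (a := a⁻¹) (b := c) (c := b⁻¹) h
  simpa using congrArg Inv.inv this

lemma tauH_upsH (c y : G) : tauH c (upsH c y) = y := by
  simp [tauH, upsH, mul_assoc]

lemma phiH_inj (c : G) : Function.Injective (phiH c) := by
  intro a b h
  simp only [phiH, List.cons.injEq] at h
  exact h.1

lemma lenA_le_one {A : Set G} {a : G} (ha : a ∈ A) : lenA A a ≤ 1 :=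
  Nat.sInf_le ⟨[a], by simp [ha]⟩

lemma eq_one_of_lenA_eq_zero {A : Set G} {a : G} (ha : a ∈ A) (h : lenA A a = 0) :
    a = 1 := by
  rcases Nat.sInf_eq_zero.mp h with h0 | h0
  · rcases h0 with ⟨l, -, hp, hl⟩
    rw [List.length_eq_zero_iff] at hl
    simp [hl] at hp
    exact hp.symm
  · exfalso
    have h1 : (1:ℕ) ∈ {n : ℕ | ∃ l : List G, (∀ a ∈ l, a ∈ A) ∧ l.prod = a ∧ l.length = n} :=
      ⟨[a], by simp [ha]⟩
    rw [h0] at h1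
    exact h1

lemma lenA_eq_one_iff {A : Set G} {g : G} : lenA A g = 1 ↔ g ∈ A ∧ g ≠ 1 := by
  constructor
  · intro h
    have hne : {n : ℕ | ∃ l : List G, (∀ a ∈ l, a ∈ A) ∧ l.prod = g ∧ l.length = n}.Nonempty := by
      by_contra hc
      rw [Set.not_nonempty_iff_eq_empty] at hc
      rw [lenA, hc] at h
      simp at h
    have := Nat.sInf_mem hne
    rw [lenA] at h
    rw [h] at this
    rcases this with ⟨l, hA, hp, hl⟩
    rcases l with _ | ⟨a, _ | ⟨b, t⟩⟩ <;> simp at hl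
    have haA : a ∈ A := hA a (by simp)
    simp at hp
    constructor
    · rw [← hp]; exact haA
    · intro h1
      have : sInf {n : ℕ | ∃ l : List G, (∀ a ∈ l, a ∈ A) ∧ l.prod = g ∧ l.length = n} ≤ 0 := by
        have : (0:ℕ) ∈ {n : ℕ | ∃ l : List G, (∀ a ∈ l, a ∈ A) ∧ l.prod = g ∧ l.length = n} :=
          ⟨[], by simp [h1]⟩
        exact Nat.sInf_le this
      omega
  · rintro ⟨hA, hne⟩
    have h1 : lenA A g ≤ 1 := lenA_le_one hA
    have h0 : lenA A g ≠ 0 := fun h => hne (eq_one_of_lenA_eq_zero hA h)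
    omega

lemma one_not_mem_XH {A : Set G} {c : G} (h2 : lenA A c = 2) : (1 : G) ∉ XH A c := by
  rintro ⟨-, hc⟩
  simp at hc
  have := lenA_le_one hc
  omega

lemma XH_subset_Ac {A : Set G} {c : G} (h2 : lenA A c = 2) : XH A c ⊆ Ac A c := by
  rintro x ⟨hx, hxc⟩
  have hx1 : x ≠ 1 := fun h => one_not_mem_XH h2 (h ▸ ⟨hx, hxc⟩ : (1:G) ∈ XH A c)
  have hxc1 : x⁻¹ * c ≠ 1 := by
    intro h
    have : c = x := by
      have := congrArg (fun g => x * g) h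
      simpa [mul_assoc] using this
    rw [this] at h2
    have := lenA_le_one hx
    omega
  refine ⟨hx, ?_⟩
  rw [leA, lenA_eq_one_iff.mpr ⟨hx, hx1⟩, lenA_eq_one_iff.mpr ⟨hxc, hxc1⟩, h2]

lemma Ac_subset {A : Set G} {c : G} (h2 : lenA A c = 2) :
    Ac A c ⊆ XH A c ∪ {1} := by
  rintro a ⟨ha, hle⟩
  rw [leA, h2] at hle
  have hla : lenA A a ≤ 1 := lenA_le_one ha
  rcases Nat.le_one_iff_eq_zero_or_eq_one.mp hla with h0 | h1
  · right
    exact eq_one_of_lenA_eq_zero ha h0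
  · left
    have : lenA A (a⁻¹ * c) = 1 := by omega
    exact ⟨ha, (lenA_eq_one_iff.mp this).1⟩

lemma phiH_mem_RedA {A : Set G} {c : G} (h2 : lenA A c = 2) {x : G} (hx : x ∈ XH A c) :
    phiH c x ∈ RedA A c := by
  refine ⟨?_, by simp [phiH], by simp [phiH, h2]⟩
  intro a ha
  simp [phiH] at ha
  rcases ha with rfl | rfl
  · exact hx.1
  · exact hx.2

lemma RedA_eq_image {A : Set G} {c : G} (h2 : lenA A c = 2) :
    RedA A c = phiH c '' XH A c := by
  ext l
  constructor
  · rintro ⟨hA, hp, hl⟩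
    rw [h2] at hl
    rcases l with _ | ⟨a, _ | ⟨b, _ | ⟨x, t⟩⟩⟩ <;> simp at hl
    simp at hp
    refine ⟨a, ⟨hA a (by simp), ?_⟩, ?_⟩
    · rw [← hp]; simpa using hA b (by simp)
    · simp [phiH, ← hp]
  · rintro ⟨x, hx, rfl⟩
    exact phiH_mem_RedA h2 hx

lemma tauH_mem_XH {A : Set G} {c : G} (hconj : ConjClosed A) {x : G} (hx : x ∈ XH A c) :
    tauH c x ∈ XH A c := by
  refine ⟨hx.2, ?_⟩
  have := hconj c⁻¹ x hx.1
  simpa [tauH, mul_assoc] using this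

lemma upsH_mem_XH {A : Set G} {c : G} (hconj : ConjClosed A) {y : G} (hy : y ∈ XH A c) :
    upsH c y ∈ XH A c := by
  constructor
  · have := hconj c (y⁻¹ * c) hy.2
    simpa [upsH, mul_assoc] using this
  · simpa [upsH, mul_assoc] using hy.1

end OrbitsAux


section OrbitsAux2

variable {G : Type*} [Group G]

lemma move_decomp {l m : List G} (hl : l.length = 2) (h : HurwitzMove l m) :
    ∃ a b : G, l = [a, b] ∧ m = [b, b⁻¹ * a * b] := by
  rcases h with ⟨p, s, a, b, hlm, hm⟩
  have hp : p.length = 0 ∧ s.length = 0 := by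
    have := congrArg List.length hlm
    simp [hl] at this
    omega
  obtain ⟨hp1, hp2⟩ := hp
  rw [List.length_eq_zero_iff] at hp1 hp2
  subst hp1; subst hp2
  simp at hlm hm
  exact ⟨a, b, hlm, hm⟩

lemma move_from {c : G} {x : G} {m : List G} (h : HurwitzMove (phiH c x) m) :
    m = phiH c (tauH c x) := by
  rcases move_decomp (by simp [phiH]) h with ⟨a, b, hl, hm⟩
  simp only [phiH, List.cons.injEq, and_true] at hl
  rcases hl with ⟨rfl, rfl⟩
  rw [hm]
  simp only [phiH, tauH, List.cons.injEq, and_true, true_and]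
  group

lemma move_phi (c x : G) : HurwitzMove (phiH c x) (phiH c (tauH c x)) := by
  refine ⟨[], [], x, x⁻¹ * c, by simp [phiH], ?_⟩
  simp only [phiH, tauH, List.nil_append, List.cons.injEq, and_true, true_and]
  group

lemma move_to {c : G} {y : G} {m : List G} (h : HurwitzMove m (phiH c y)) :
    m = phiH c (upsH c y) := by
  rcases h with ⟨p, s, a, b, hm, hl⟩
  have hp : p.length = 0 ∧ s.length = 0 := by
    have := congrArg List.length hl
    simp [phiH] at this
    omega
  obtain ⟨hp1, hp2⟩ := hp
  rw [List.length_eq_zero_iff] at hp1 hp2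
  subst hp1; subst hp2
  simp only [List.nil_append] at hm hl
  simp only [phiH, List.cons.injEq, and_true] at hl
  rcases hl with ⟨rfl, hl⟩
  have ha : a = c * y⁻¹ := by
    have h3 := congrArg (fun g => y * g * y⁻¹) hl
    rw [show y * (y⁻¹ * c) * y⁻¹ = c * y⁻¹ by group,
      show y * (y⁻¹ * a * y) * y⁻¹ = a by group] at h3
    exact h3.symm
  rw [hm, ha]
  simp only [phiH, upsH, List.cons.injEq, and_true, true_and]
  group

lemma RH_refl (c x : G) : RH c x x := ⟨0, rfl⟩

lemma RH_tau (c x : G) : RH c x (tauH c x) := ⟨1, rfl⟩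

lemma RH_trans {c x y z : G} (h1 : RH c x y) (h2 : RH c y z) : RH c x z := by
  rcases h1 with ⟨k1, rfl⟩
  rcases h2 with ⟨k2, rfl⟩
  exact ⟨k2 + k1, (Function.iterate_add_apply _ _ _ _)⟩

lemma iterate_mem_XH {A : Set G} {c : G} (hconj : ConjClosed A) {x : G} (hx : x ∈ XH A c)
    (k : ℕ) : (tauH c)^[k] x ∈ XH A c := by
  induction k with
  | zero => exact hx
  | succ n ih => rw [Function.iterate_succ_apply']; exact tauH_mem_XH hconj ih

lemma RH_mem {A : Set G} {c : G} (hconj : ConjClosed A) {x y : G} (hx : x ∈ XH A c)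
    (h : RH c x y) : y ∈ XH A c := by
  rcases h with ⟨k, rfl⟩
  exact iterate_mem_XH hconj hx k

lemma exists_period {A : Set G} {c : G} (hconj : ConjClosed A) (hXfin : (XH A c).Finite)
    {x : G} (hx : x ∈ XH A c) : ∃ k : ℕ, 0 < k ∧ (tauH c)^[k] x = x := by
  have hmaps : ∀ k ∈ Finset.range (hXfin.toFinset.card + 1),
      (tauH c)^[k] x ∈ hXfin.toFinset := by
    intro k _
    rw [Set.Finite.mem_toFinset]
    exact iterate_mem_XH hconj hx k
  obtain ⟨i, -, j, -, hij, heq⟩ :=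
    Finset.exists_ne_map_eq_of_card_lt_of_maps_to (by simp) hmaps
  rcases Ne.lt_or_gt hij with h | h
  · refine ⟨j - i, by omega, ?_⟩
    have : (tauH c)^[i] ((tauH c)^[j-i] x) = (tauH c)^[i] x := by
      rw [← Function.iterate_add_apply, show i + (j - i) = j by omega, heq]
    exact (tauH_inj c).iterate i this
  · refine ⟨i - j, by omega, ?_⟩
    have : (tauH c)^[j] ((tauH c)^[i-j] x) = (tauH c)^[j] x := by
      rw [← Function.iterate_add_apply, show j + (i - j) = i by omega, heq.symm]
    exact (tauH_inj c).iterate j this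

lemma iterate_mul_period {c : G} {x : G} {p : ℕ} (hp : (tauH c)^[p] x = x) :
    ∀ m : ℕ, (tauH c)^[m * p] x = x := by
  intro m
  induction m with
  | zero => simp
  | succ n ih =>
    rw [show (n+1) * p = p + n * p by ring, Function.iterate_add_apply, ih, hp]

lemma RH_symm {A : Set G} {c : G} (hconj : ConjClosed A) (hXfin : (XH A c).Finite)
    {x y : G} (hx : x ∈ XH A c) (h : RH c x y) : RH c y x := by
  rcases h with ⟨k, rfl⟩
  obtain ⟨p, hp0, hp⟩ := exists_period hconj hXfin hx
  refine ⟨k * p - k, ?_⟩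
  rw [← Function.iterate_add_apply]
  have hkp : k ≤ k * p := Nat.le_mul_of_pos_right k hp0
  rw [show k * p - k + k = k * p by omega]
  exact iterate_mul_period hp k

lemma orbH_eq {A : Set G} {c : G} (hconj : ConjClosed A) (hXfin : (XH A c).Finite)
    {x y : G} (hx : x ∈ XH A c) (h : RH c x y) : orbH A c x = orbH A c y := by
  have hy : y ∈ XH A c := RH_mem hconj hx h
  ext z
  constructor
  · rintro ⟨hz, hxz⟩
    exact ⟨hz, RH_trans (RH_symm hconj hXfin hx h) hxz⟩
  · rintro ⟨hz, hyz⟩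
    exact ⟨hz, RH_trans h hyz⟩

lemma eqvgen_aux {A : Set G} {c : G} (hconj : ConjClosed A) (hXfin : (XH A c).Finite)
    {l m : List G} (h : Relation.EqvGen HurwitzMove l m) :
    (∀ x ∈ XH A c, l = phiH c x → ∃ y ∈ XH A c, m = phiH c y ∧ RH c x y) ∧
    (∀ y ∈ XH A c, m = phiH c y → ∃ x ∈ XH A c, l = phiH c x ∧ RH c x y) := by
  induction h with
  | rel a b hab =>
    constructor
    · rintro x hx rfl
      exact ⟨tauH c x, tauH_mem_XH hconj hx, move_from hab, RH_tau c x⟩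
    · rintro y hy rfl
      refine ⟨upsH c y, upsH_mem_XH hconj hy, move_to hab, ?_⟩
      exact ⟨1, by simp [tauH_upsH]⟩
  | refl a =>
    exact ⟨fun x hx hl => ⟨x, hx, hl, RH_refl c x⟩, fun y hy hm => ⟨y, hy, hm, RH_refl c y⟩⟩
  | symm a b hab ih =>
    constructor
    · rintro x hx rfl
      obtain ⟨x', hx', ha, hR⟩ := ih.2 x hx rfl
      exact ⟨x', hx', ha, RH_symm hconj hXfin hx' hR⟩
    · rintro y hy rfl
      obtain ⟨y', hy', hb, hR⟩ := ih.1 y hy rfl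
      exact ⟨y', hy', hb, RH_symm hconj hXfin hy hR⟩
  | trans a b d hab hbd ih1 ih2 =>
    constructor
    · rintro x hx rfl
      obtain ⟨y, hy, rfl, hR1⟩ := ih1.1 x hx rfl
      obtain ⟨z, hz, rfl, hR2⟩ := ih2.1 y hy rfl
      exact ⟨z, hz, rfl, RH_trans hR1 hR2⟩
    · rintro z hz rfl
      obtain ⟨y, hy, rfl, hR2⟩ := ih2.2 z hz rfl
      obtain ⟨x, hx, rfl, hR1⟩ := ih1.2 y hy rfl
      exact ⟨x, hx, rfl, RH_trans hR1 hR2⟩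

lemma eqvgen_of_RH {c : G} {x y : G} (h : RH c x y) :
    Relation.EqvGen HurwitzMove (phiH c x) (phiH c y) := by
  rcases h with ⟨k, rfl⟩
  induction k with
  | zero => exact Relation.EqvGen.refl _
  | succ n ih =>
    refine Relation.EqvGen.trans _ _ _ ih ?_
    rw [Function.iterate_succ_apply']
    exact Relation.EqvGen.rel _ _ (move_phi c _)

lemma class_eq_image {A : Set G} {c : G} (hconj : ConjClosed A) (h2 : lenA A c = 2)
    (hXfin : (XH A c).Finite) {x : G} (hx : x ∈ XH A c) :
    RedA A c ∩ {m : List G | Relation.EqvGen HurwitzMove (phiH c x) m}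
      = phiH c '' orbH A c x := by
  ext m
  constructor
  · rintro ⟨-, hm⟩
    obtain ⟨y, hy, rfl, hR⟩ := (eqvgen_aux hconj hXfin hm).1 x hx rfl
    exact ⟨y, ⟨hy, hR⟩, rfl⟩
  · rintro ⟨y, ⟨hy, hR⟩, rfl⟩
    exact ⟨phiH_mem_RedA h2 hy, eqvgen_of_RH hR⟩

end OrbitsAux2


section OrbitsAux3

variable {G : Type*} [Group G]

/-- auxiliary: set of orbits inside `XH`. -/
def OrbX (A : Set G) (c : G) : Set (Set G) := {P | ∃ x ∈ XH A c, P = orbH A c x}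

lemma XH_finite {A : Set G} {c : G} (h2 : lenA A c = 2) (hfin : (RedA A c).Finite) :
    (XH A c).Finite :=
  Set.Finite.of_finite_image (by rw [← RedA_eq_image h2]; exact hfin) ((phiH_inj c).injOn)

lemma exists_min_of_linear {T : Set G} {r : G → G → Prop} (hr : IsLinearOrderOn T r)
    {Y : Set G} (hfin : Y.Finite) :
    Y ⊆ T → Y.Nonempty → ∃ m ∈ Y, ∀ y ∈ Y, r m y := by
  refine Set.Finite.induction_on
    (motive := fun Y _ => Y ⊆ T → Y.Nonempty → ∃ m ∈ Y, ∀ y ∈ Y, r m y) Y hfin ?_ ?_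
  · rintro - ⟨y, hy⟩
    exact absurd hy (by simp)
  · intro a s ha hs ih hsub hne
    by_cases hse : s.Nonempty
    · obtain ⟨m, hm, hmin⟩ := ih (fun y hy => hsub (Set.mem_insert_of_mem a hy)) hse
      have haT : a ∈ T := hsub (Set.mem_insert a s)
      have hmT : m ∈ T := hsub (Set.mem_insert_of_mem a hm)
      rcases hr.2.2.2 a haT m hmT with ham | hma
      · refine ⟨a, Set.mem_insert a s, ?_⟩
        intro y hy
        rcases Set.mem_insert_iff.mp hy with rfl | hy
        · exact hr.1 _ haT
        · exact hr.2.2.1 a haT m hmT y (hsub (Set.mem_insert_of_mem a hy)) ham (hmin y hy)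
      · refine ⟨m, Set.mem_insert_of_mem a hm, ?_⟩
        intro y hy
        rcases Set.mem_insert_iff.mp hy with rfl | hy
        · exact hma
        · exact hmin y hy
    · rw [Set.not_nonempty_iff_eq_empty] at hse
      subst hse
      refine ⟨a, Set.mem_insert a _, ?_⟩
      intro y hy
      rcases Set.mem_insert_iff.mp hy with rfl | hy
      · exact hr.1 _ (hsub (Set.mem_insert _ _))
      · simp at hy

lemma lowerX {A : Set G} {c : G} (hconj : ConjClosed A) (h2 : lenA A c = 2)
    (hXfin : (XH A c).Finite) {r : G → G → Prop} (hr : IsLinearOrderOn (Ac A c) r) :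
    (OrbX A c).ncard ≤ {x ∈ XH A c | r x (x⁻¹ * c)}.ncard := by
  classical
  set f : Set G → G := fun P => if h : ∃ m ∈ P, ∀ y ∈ P, r m y then h.choose else 1 with hf
  have hkey : ∀ P ∈ OrbX A c, (f P ∈ P ∧ ∀ y ∈ P, r (f P) y) ∧ P ⊆ XH A c := by
    rintro P ⟨x, hx, rfl⟩
    have hsub : orbH A c x ⊆ XH A c := fun y hy => hy.1
    have hne : (orbH A c x).Nonempty := ⟨x, hx, RH_refl c x⟩
    have hex : ∃ m ∈ orbH A c x, ∀ y ∈ orbH A c x, r m y :=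
      exists_min_of_linear hr (hXfin.subset hsub)
        (fun y hy => XH_subset_Ac h2 (hsub hy)) hne
    have : f (orbH A c x) = hex.choose := dif_pos hex
    rw [this]
    exact ⟨⟨hex.choose_spec.1, hex.choose_spec.2⟩, hsub⟩
  refine Set.ncard_le_ncard_of_injOn f ?_ ?_
    (hXfin.subset (fun y hy => hy.1))
  · rintro P hP
    obtain ⟨⟨hfP, hmin⟩, hsub⟩ := hkey P hP
    obtain ⟨x, hx, rfl⟩ := hP
    have hfX : f (orbH A c x) ∈ XH A c := hsub hfP
    have htau : tauH c (f (orbH A c x)) ∈ orbH A c x :=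
      ⟨tauH_mem_XH hconj hfX, RH_trans hfP.2 (RH_tau c _)⟩
    exact ⟨hfX, hmin _ htau⟩
  · intro P hP Q hQ hPQ
    obtain ⟨⟨hfP, -⟩, -⟩ := hkey P hP
    obtain ⟨⟨hfQ, -⟩, -⟩ := hkey Q hQ
    obtain ⟨x, hx, rfl⟩ := hP
    obtain ⟨x', hx', rfl⟩ := hQ
    calc orbH A c x = orbH A c (f (orbH A c x)) := orbH_eq hconj hXfin hx hfP.2
      _ = orbH A c (f (orbH A c x')) := by rw [hPQ]
      _ = orbH A c x' := (orbH_eq hconj hXfin hx' hfQ.2).symm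

lemma orbS_eq {A : Set G} {c : G} (hconj : ConjClosed A) (h2 : lenA A c = 2)
    (hXfin : (XH A c).Finite) :
    {O : Set (List G) | ∃ l ∈ RedA A c,
        O = RedA A c ∩ {m : List G | Relation.EqvGen HurwitzMove l m}}
      = Set.image (phiH c) '' OrbX A c := by
  ext O
  constructor
  · rintro ⟨l, hl, rfl⟩
    rw [RedA_eq_image h2] at hl
    obtain ⟨x, hx, rfl⟩ := hl
    exact ⟨orbH A c x, ⟨x, hx, rfl⟩, (class_eq_image hconj h2 hXfin hx).symm⟩
  · rintro ⟨P, ⟨x, hx, rfl⟩, rfl⟩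
    exact ⟨phiH c x, phiH_mem_RedA h2 hx, (class_eq_image hconj h2 hXfin hx).symm⟩

lemma risingS_eq {A : Set G} {c : G} (h2 : lenA A c = 2) (r : G → G → Prop) :
    {l ∈ RedA A c | l.Chain' r} = phiH c '' {x ∈ XH A c | r x (x⁻¹ * c)} := by
  ext l
  constructor
  · rintro ⟨hl, hch⟩
    rw [RedA_eq_image h2] at hl
    obtain ⟨x, hx, rfl⟩ := hl
    refine ⟨x, ⟨hx, ?_⟩, rfl⟩
    simpa [phiH, List.Chain', List.isChain_cons_cons] using hch
  · rintro ⟨x, ⟨hx, hr⟩, rfl⟩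
    refine ⟨phiH_mem_RedA h2 hx, ?_⟩
    simp [phiH, List.Chain', List.isChain_cons_cons, hr]

lemma ncard_orbS {A : Set G} {c : G} (hconj : ConjClosed A) (h2 : lenA A c = 2)
    (hXfin : (XH A c).Finite) :
    {O : Set (List G) | ∃ l ∈ RedA A c,
        O = RedA A c ∩ {m : List G | Relation.EqvGen HurwitzMove l m}}.ncard
      = (OrbX A c).ncard := by
  rw [orbS_eq hconj h2 hXfin]
  exact Set.ncard_image_of_injOn ((Set.image_injective.mpr (phiH_inj c)).injOn)

lemma ncard_rising {A : Set G} {c : G} (h2 : lenA A c = 2) (r : G → G → Prop) :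
    {l ∈ RedA A c | l.Chain' r}.ncard = {x ∈ XH A c | r x (x⁻¹ * c)}.ncard := by
  rw [risingS_eq h2 r]
  exact Set.ncard_image_of_injOn ((phiH_inj c).injOn)

end OrbitsAux3


section OrbitsAux4

variable {G : Type*} [Group G]

open Classical in
/-- auxiliary: orbit representative. -/
noncomputable def repH (A : Set G) (c : G) (x : G) : G :=
  if h : (orbH A c x).Nonempty then h.some else 1

/-- auxiliary: position of `x` in its orbit. -/
noncomputable def posH (A : Set G) (c : G) (x : G) : ℕ :=
  sInf {k : ℕ | (tauH c)^[k] (repH A c x) = x}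

/-- auxiliary: period of the orbit of `x`. -/
noncomputable def perH (A : Set G) (c : G) (x : G) : ℕ :=
  sInf {k : ℕ | 0 < k ∧ (tauH c)^[k] (repH A c x) = repH A c x}

/-- auxiliary: set of last elements of orbits. -/
def MH (A : Set G) (c : G) : Set G :=
  {x | x ∈ XH A c ∧ posH A c x + 1 = perH A c x}

lemma repH_mem {A : Set G} {c : G} {x : G} (hx : x ∈ XH A c) :
    repH A c x ∈ orbH A c x := by
  have hne : (orbH A c x).Nonempty := ⟨x, hx, RH_refl c x⟩
  unfold repH
  rw [dif_pos hne]
  exact hne.some_mem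

lemma repH_congr {A : Set G} {c : G} {x y : G} (h : orbH A c x = orbH A c y) :
    repH A c x = repH A c y := by
  classical
  unfold repH
  exact congrArg (fun S : Set G => if h : S.Nonempty then h.some else (1:G)) h

lemma posH_spec {A : Set G} {c : G} (hconj : ConjClosed A) (hXfin : (XH A c).Finite)
    {x : G} (hx : x ∈ XH A c) : (tauH c)^[posH A c x] (repH A c x) = x := by
  have hrep := repH_mem hx
  have : RH c (repH A c x) x := RH_symm hconj hXfin hx hrep.2
  exact Nat.sInf_mem this

lemma perH_spec {A : Set G} {c : G} (hconj : ConjClosed A) (hXfin : (XH A c).Finite)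
    {x : G} (hx : x ∈ XH A c) :
    0 < perH A c x ∧ (tauH c)^[perH A c x] (repH A c x) = repH A c x := by
  have hrep := repH_mem hx
  exact Nat.sInf_mem (exists_period hconj hXfin hrep.1)

lemma posH_lt_perH {A : Set G} {c : G} (hconj : ConjClosed A) (hXfin : (XH A c).Finite)
    {x : G} (hx : x ∈ XH A c) : posH A c x < perH A c x := by
  obtain ⟨hper0, hper⟩ := perH_spec hconj hXfin hx
  by_contra h
  push_neg at h
  have hd : (tauH c)^[posH A c x - perH A c x] (repH A c x) = x := by
    have := posH_spec hconj hXfin hx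
    calc (tauH c)^[posH A c x - perH A c x] (repH A c x)
        = (tauH c)^[posH A c x - perH A c x] ((tauH c)^[perH A c x] (repH A c x)) := by
          rw [hper]
      _ = (tauH c)^[posH A c x] (repH A c x) := by
          rw [← Function.iterate_add_apply]
          congr 1
          omega
      _ = x := this
  have hle : posH A c x ≤ posH A c x - perH A c x := Nat.sInf_le hd
  omega

lemma iterate_distinct {A : Set G} {c : G} (hconj : ConjClosed A) (hXfin : (XH A c).Finite)
    {x : G} (hx : x ∈ XH A c) {i j : ℕ} (hij : i < j) (hj : j < perH A c x) :
    (tauH c)^[i] (repH A c x) ≠ (tauH c)^[j] (repH A c x) := by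
  obtain ⟨hper0, hper⟩ := perH_spec hconj hXfin hx
  intro h
  have hk : (tauH c)^[perH A c x - j + i] (repH A c x) = repH A c x := by
    calc (tauH c)^[perH A c x - j + i] (repH A c x)
        = (tauH c)^[perH A c x - j] ((tauH c)^[i] (repH A c x)) := by
          rw [← Function.iterate_add_apply]
      _ = (tauH c)^[perH A c x - j] ((tauH c)^[j] (repH A c x)) := by rw [h]
      _ = (tauH c)^[perH A c x] (repH A c x) := by
          rw [← Function.iterate_add_apply]
          congr 1
          omega
      _ = repH A c x := hper
  have : perH A c x ≤ perH A c x - j + i := Nat.sInf_le ⟨by omega, hk⟩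
  omega

lemma repH_tau {A : Set G} {c : G} (hconj : ConjClosed A) (hXfin : (XH A c).Finite)
    {x : G} (hx : x ∈ XH A c) : repH A c (tauH c x) = repH A c x :=
  (repH_congr (orbH_eq hconj hXfin hx (RH_tau c x))).symm

lemma perH_tau {A : Set G} {c : G} (hconj : ConjClosed A) (hXfin : (XH A c).Finite)
    {x : G} (hx : x ∈ XH A c) : perH A c (tauH c x) = perH A c x := by
  simp only [perH, repH_tau hconj hXfin hx]

lemma posH_tau_zero {A : Set G} {c : G} (hconj : ConjClosed A) (hXfin : (XH A c).Finite)
    {x : G} (hx : x ∈ XH A c) (h : posH A c x + 1 = perH A c x) :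
    posH A c (tauH c x) = 0 := by
  have hrep : tauH c x = repH A c x := by
    have h1 : (tauH c)^[posH A c x + 1] (repH A c x) = tauH c x := by
      rw [Function.iterate_succ_apply', posH_spec hconj hXfin hx]
    rw [← h1, h, (perH_spec hconj hXfin hx).2]
  have h0 : (0 : ℕ) ∈ {k : ℕ | (tauH c)^[k] (repH A c (tauH c x)) = tauH c x} := by
    show (tauH c)^[0] (repH A c (tauH c x)) = tauH c x
    simp only [Function.iterate_zero, id_eq]
    rw [repH_tau hconj hXfin hx, ← hrep]
  have hle := Nat.sInf_le h0
  have : posH A c (tauH c x) = 0 := Nat.le_zero.mp hle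
  exact this

lemma posH_tau_succ {A : Set G} {c : G} (hconj : ConjClosed A) (hXfin : (XH A c).Finite)
    {x : G} (hx : x ∈ XH A c) (h : posH A c x + 1 < perH A c x) :
    posH A c (tauH c x) = posH A c x + 1 := by
  have htx : tauH c x ∈ XH A c := tauH_mem_XH hconj hx
  have h1 : (tauH c)^[posH A c x + 1] (repH A c (tauH c x)) = tauH c x := by
    rw [repH_tau hconj hXfin hx, Function.iterate_succ_apply', posH_spec hconj hXfin hx]
  have hle : posH A c (tauH c x) ≤ posH A c x + 1 := Nat.sInf_le h1
  rcases Nat.lt_or_ge (posH A c (tauH c x)) (posH A c x + 1) with hlt | hge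
  · exfalso
    have h2 : (tauH c)^[posH A c (tauH c x)] (repH A c x) = tauH c x := by
      rw [← repH_tau hconj hXfin hx]
      exact posH_spec hconj hXfin htx
    have h1' := h1
    rw [repH_tau hconj hXfin hx] at h1'
    exact iterate_distinct hconj hXfin hx hlt h (h2.trans h1'.symm)
  · omega

lemma M_iff {A : Set G} {c : G} (hconj : ConjClosed A) (hXfin : (XH A c).Finite)
    {x : G} (hx : x ∈ XH A c) :
    (posH A c (tauH c x) ≤ posH A c x ↔ posH A c x + 1 = perH A c x) := by
  have hlt := posH_lt_perH hconj hXfin hx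
  by_cases h : posH A c x + 1 = perH A c x
  · simp [h, posH_tau_zero hconj hXfin hx h]
  · have h' : posH A c x + 1 < perH A c x := by omega
    rw [posH_tau_succ hconj hXfin hx h']
    omega

lemma M_inj {A : Set G} {c : G} (hconj : ConjClosed A) (hXfin : (XH A c).Finite) :
    Set.InjOn (orbH A c) (MH A c) := by
  rintro x ⟨hx, hpx⟩ y ⟨hy, hpy⟩ h
  have hrep : repH A c x = repH A c y := repH_congr h
  have hper : perH A c x = perH A c y := by simp only [perH, hrep]
  have hpos : posH A c x = posH A c y := by omega
  calc x = (tauH c)^[posH A c x] (repH A c x) := (posH_spec hconj hXfin hx).symm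
    _ = (tauH c)^[posH A c y] (repH A c y) := by rw [hrep, hpos]
    _ = y := posH_spec hconj hXfin hy

lemma M_surj {A : Set G} {c : G} (hconj : ConjClosed A) (hXfin : (XH A c).Finite)
    {x : G} (hx : x ∈ XH A c) : ∃ m ∈ MH A c, orbH A c m = orbH A c x := by
  obtain ⟨hper0, hper⟩ := perH_spec hconj hXfin hx
  set m := (tauH c)^[perH A c x - 1] (repH A c x) with hm
  have hrepX : repH A c x ∈ XH A c := (repH_mem hx).1
  have hmX : m ∈ XH A c := iterate_mem_XH hconj hrepX _
  have hRxm : RH c x m := RH_trans (RH_symm hconj hXfin hrepX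
    (RH_symm hconj hXfin hx (repH_mem hx).2)) ⟨perH A c x - 1, rfl⟩
  have horb : orbH A c m = orbH A c x := (orbH_eq hconj hXfin hx hRxm).symm
  have hrepm : repH A c m = repH A c x := repH_congr horb
  have hperm : perH A c m = perH A c x := by simp only [perH, hrepm]
  have hposm : posH A c m = perH A c x - 1 := by
    have hmem : (tauH c)^[perH A c x - 1] (repH A c m) = m := by rw [hrepm]
    have hle : posH A c m ≤ perH A c x - 1 := Nat.sInf_le hmem
    rcases Nat.lt_or_ge (posH A c m) (perH A c x - 1) with hlt | hge
    · exfalso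
      have hspec : (tauH c)^[posH A c m] (repH A c x) = m := by
        rw [← hrepm]
        exact posH_spec hconj hXfin hmX
      exact iterate_distinct hconj hXfin hx hlt (by omega) (hspec.trans rfl)
    · omega
  exact ⟨m, ⟨hmX, by omega⟩, horb⟩

lemma ncard_OrbX_eq_M {A : Set G} {c : G} (hconj : ConjClosed A)
    (hXfin : (XH A c).Finite) : (OrbX A c).ncard = (MH A c).ncard := by
  have himg : OrbX A c = orbH A c '' MH A c := by
    ext P
    constructor
    · rintro ⟨x, hx, rfl⟩
      obtain ⟨m, hm, horb⟩ := M_surj hconj hXfin hx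
      exact ⟨m, hm, horb⟩
    · rintro ⟨m, hm, rfl⟩
      exact ⟨m, hm.1, rfl⟩
  rw [himg]
  exact Set.ncard_image_of_injOn (M_inj hconj hXfin)

/-- auxiliary: bound on positions. -/
noncomputable def NH (A : Set G) (c : G) : ℕ := sSup (posH A c '' XH A c) + 1

lemma posH_lt_NH {A : Set G} {c : G} (hXfin : (XH A c).Finite) {x : G}
    (hx : x ∈ XH A c) : posH A c x < NH A c :=
  Nat.lt_succ_of_le (le_csSup (Set.Finite.bddAbove (hXfin.image _)) ⟨x, hx, rfl⟩)

open Classical in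
/-- auxiliary: an injective enumeration of `XH`. -/
noncomputable def iotaH (A : Set G) (c : G) (hXfin : (XH A c).Finite) : G → ℕ :=
  fun g => hXfin.toFinset.toList.idxOf g

lemma iotaH_inj {A : Set G} {c : G} (hXfin : (XH A c).Finite) {x y : G}
    (hx : x ∈ XH A c) (hy : y ∈ XH A c) (h : iotaH A c hXfin x = iotaH A c hXfin y) :
    x = y := by
  classical
  have hx' : x ∈ hXfin.toFinset.toList := by
    rw [Finset.mem_toList, Set.Finite.mem_toFinset]; exact hx
  have hy' : y ∈ hXfin.toFinset.toList := by
    rw [Finset.mem_toList, Set.Finite.mem_toFinset]; exact hy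
  unfold iotaH at h
  exact (List.idxOf_inj hx').mp (by convert h)

/-- auxiliary: the rank function defining the optimal order. -/
noncomputable def rho0H (A : Set G) (c : G) (hXfin : (XH A c).Finite) : G → ℕ :=
  fun g => NH A c * iotaH A c hXfin (repH A c g) + posH A c g

open Classical in
/-- auxiliary: the rank function extended to `1`. -/
noncomputable def rhoH (A : Set G) (c : G) (hXfin : (XH A c).Finite) : G → ℕ :=
  fun g => if g = 1 then 0 else rho0H A c hXfin g + 1

lemma rho0H_inj {A : Set G} {c : G} (hconj : ConjClosed A) (hXfin : (XH A c).Finite)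
    {x y : G} (hx : x ∈ XH A c) (hy : y ∈ XH A c)
    (h : rho0H A c hXfin x = rho0H A c hXfin y) : x = y := by
  have hN0 : 0 < NH A c := by simp [NH]
  have hpx := posH_lt_NH hXfin hx
  have hpy := posH_lt_NH hXfin hy
  unfold rho0H at h
  have hq : iotaH A c hXfin (repH A c x) = iotaH A c hXfin (repH A c y) := by
    have h1 := congrArg (fun n => n / NH A c) h
    simpa [Nat.mul_add_div hN0, Nat.div_eq_of_lt hpx, Nat.div_eq_of_lt hpy] using h1
  have hrep : repH A c x = repH A c y :=
    iotaH_inj hXfin (repH_mem hx).1 (repH_mem hy).1 hq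
  have hpos : posH A c x = posH A c y := by
    rw [hq] at h
    omega
  calc x = (tauH c)^[posH A c x] (repH A c x) := (posH_spec hconj hXfin hx).symm
    _ = (tauH c)^[posH A c y] (repH A c y) := by rw [hrep, hpos]
    _ = y := posH_spec hconj hXfin hy

lemma rhoH_inj {A : Set G} {c : G} (hconj : ConjClosed A) (h2 : lenA A c = 2)
    (hXfin : (XH A c).Finite) {x y : G}
    (hx : x ∈ XH A c ∪ {1}) (hy : y ∈ XH A c ∪ {1})
    (h : rhoH A c hXfin x = rhoH A c hXfin y) : x = y := by
  rcases hx with hx | hx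
  · have hx1 : x ≠ 1 := fun h1 => one_not_mem_XH h2 (h1 ▸ hx)
    rcases hy with hy | hy
    · have hy1 : y ≠ 1 := fun h1 => one_not_mem_XH h2 (h1 ▸ hy)
      simp only [rhoH, if_neg hx1, if_neg hy1] at h
      exact rho0H_inj hconj hXfin hx hy (by omega)
    · simp only [Set.mem_singleton_iff] at hy
      subst hy
      simp [rhoH, hx1] at h
  · simp only [Set.mem_singleton_iff] at hx
    subst hx
    rcases hy with hy | hy
    · have hy1 : y ≠ 1 := fun h1 => one_not_mem_XH h2 (h1 ▸ hy)
      simp [rhoH, hy1] at h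
    · simp only [Set.mem_singleton_iff] at hy
      rw [hy]

lemma rising_eq_M {A : Set G} {c : G} (hconj : ConjClosed A) (h2 : lenA A c = 2)
    (hXfin : (XH A c).Finite) :
    {x ∈ XH A c | rhoH A c hXfin (x⁻¹ * c) ≤ rhoH A c hXfin x} = MH A c := by
  ext x
  simp only [Set.mem_setOf_eq, MH]
  constructor
  · rintro ⟨hx, hr⟩
    refine ⟨hx, ?_⟩
    rw [← M_iff hconj hXfin hx]
    have htx : tauH c x ∈ XH A c := tauH_mem_XH hconj hx
    have hx1 : x ≠ 1 := fun h1 => one_not_mem_XH h2 (h1 ▸ hx)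
    have htx1 : tauH c x ≠ 1 := fun h1 => one_not_mem_XH h2 (h1 ▸ htx)
    have hr' : rhoH A c hXfin (tauH c x) ≤ rhoH A c hXfin x := hr
    simp only [rhoH, if_neg hx1, if_neg htx1] at hr'
    unfold rho0H at hr'
    rw [repH_tau hconj hXfin hx] at hr'
    omega
  · rintro ⟨hx, hM⟩
    refine ⟨hx, ?_⟩
    have hpos : posH A c (tauH c x) ≤ posH A c x := (M_iff hconj hXfin hx).mpr hM
    have htx : tauH c x ∈ XH A c := tauH_mem_XH hconj hx
    have hx1 : x ≠ 1 := fun h1 => one_not_mem_XH h2 (h1 ▸ hx)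
    have htx1 : tauH c x ≠ 1 := fun h1 => one_not_mem_XH h2 (h1 ▸ htx)
    show rhoH A c hXfin (tauH c x) ≤ rhoH A c hXfin x
    simp only [rhoH, if_neg hx1, if_neg htx1]
    unfold rho0H
    rw [repH_tau hconj hXfin hx]
    omega

end OrbitsAux4


theorem orbits_eq_min_rising (A : Set G) (hgen : GeneratesM A)
    (hconj : ConjClosed A) (c : G) (h2 : lenA A c = 2)
    (hfin : (RedA A c).Finite) :
    IsLeast
      {n : ℕ | ∃ r : G → G → Prop, IsLinearOrderOn (Ac A c) r ∧
        n = {l ∈ RedA A c | l.Chain' r}.ncard}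
      ({O : Set (List G) | ∃ l ∈ RedA A c,
        O = RedA A c ∩ {m : List G | Relation.EqvGen HurwitzMove l m}}.ncard) := by
  have hXfin : (XH A c).Finite := XH_finite h2 hfin
  constructor
  · refine ⟨fun a b => rhoH A c hXfin b ≤ rhoH A c hXfin a, ?_, ?_⟩
    · refine ⟨fun a _ => le_refl _, ?_, ?_, ?_⟩
      · intro a ha b hb hab hba
        exact rhoH_inj hconj h2 hXfin (Ac_subset h2 ha) (Ac_subset h2 hb)
          (le_antisymm hba hab)
      · intro a _ b _ d _ h1 h2'
        exact le_trans h2' h1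
      · intro a _ b _
        exact le_total _ _
    · rw [ncard_orbS hconj h2 hXfin, ncard_rising h2, ncard_OrbX_eq_M hconj hXfin]
      exact congrArg Set.ncard (rising_eq_M hconj h2 hXfin).symm
  · rintro n ⟨r, hr, rfl⟩
    rw [ncard_orbS hconj h2 hXfin, ncard_rising h2]
    exact lowerX hconj h2 hXfin hr
end
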